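/- Let b > 1 and 0 < f < 1 (two incoming shocks in a head-on interaction of the isentropic p-system). Then the unique B > 0 solving φ←(B) + bf·φ←(B/(bf)) + φ→(f) - f·φ←(b) = 0 satisfies B > 1 and B > bf; that is, a head-on interaction of a forward shock and a backward shock always produces an outgoing backward shock and an outgoing forward shock. -/

import Mathlib

open Real Set Filter Topology

/-- κ = √γ / α with α = (γ-1)/2. -/
noncomputable def kappa (γ : ℝ) : ℝ := Real.sqrt γ / ((γ - 1) / 2)

/-- The shock branch x ↦ √((1 - x^{-1/α})(x^{γ/α} - 1)), α = (γ-1)/2. -/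
noncomputable def shockPart (γ : ℝ) (x : ℝ) : ℝ :=
  Real.sqrt ((1 - x ^ (-(1 : ℝ) / ((γ - 1) / 2))) * (x ^ (γ / ((γ - 1) / 2)) - 1))

/-- Backward auxiliary function φ← : rarefaction branch κ(x-1) for x ≤ 1,
    shock branch for x ≥ 1 (they agree, with value 0, at x = 1). -/
noncomputable def phiB (γ : ℝ) (x : ℝ) : ℝ :=
  if x ≤ 1 then kappa γ * (x - 1) else shockPart γ x

/-- Forward auxiliary function φ→ : shock branch -√(...) for x ≤ 1,
    rarefaction branch κ(x-1) for x ≥ 1 (they agree, with value 0, at x = 1). -/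
noncomputable def phiF (γ : ℝ) (x : ℝ) : ℝ :=
  if x < 1 then -shockPart γ x else kappa γ * (x - 1)

namespace HeadonAux

variable {γ : ℝ}


lemma e_sum (hγ : 1 < γ) : -(1:ℝ)/((γ-1)/2) + γ/((γ-1)/2) = 2 := by
  have h : γ - 1 ≠ 0 := by linarith
  field_simp
  ring

lemma e1_neg (hγ : 1 < γ) : -(1:ℝ)/((γ-1)/2) < 0 := by
  have : (0:ℝ) < (γ-1)/2 := by linarith
  exact div_neg_of_neg_of_pos (by norm_num) this

lemma e2_pos (hγ : 1 < γ) : 0 < γ/((γ-1)/2) := by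
  exact div_pos (by linarith) (by linarith)

lemma factor (hγ : 1 < γ) {t : ℝ} (ht : 0 < t) :
    t ^ (γ/((γ-1)/2)) - 1
      = t ^ (2:ℝ) * (t ^ ((1:ℝ)/((γ-1)/2)) - t ^ (-(2:ℝ))) := by
  have h2 : (2:ℝ) + 1/((γ-1)/2) = γ/((γ-1)/2) := by
    have h : γ - 1 ≠ 0 := by linarith
    field_simp
    ring
  rw [mul_sub, ← Real.rpow_add ht, ← Real.rpow_add ht, h2]
  norm_num


lemma shock_factored (hγ : 1 < γ) {t : ℝ} (ht : 0 < t) :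
    shockPart γ t
      = t * Real.sqrt ((1 - t ^ (-(1:ℝ)/((γ-1)/2))) * (t ^ ((1:ℝ)/((γ-1)/2)) - t ^ (-(2:ℝ)))) := by
  unfold shockPart
  rw [factor hγ ht]
  rw [show (1 - t ^ (-(1:ℝ)/((γ-1)/2))) * (t ^ (2:ℝ) * (t ^ ((1:ℝ)/((γ-1)/2)) - t ^ (-(2:ℝ))))
      = t ^ (2:ℝ) * ((1 - t ^ (-(1:ℝ)/((γ-1)/2))) * (t ^ ((1:ℝ)/((γ-1)/2)) - t ^ (-(2:ℝ)))) by ring]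
  rw [Real.sqrt_mul (Real.rpow_nonneg ht.le _)]
  congr 1
  rw [show (2:ℝ) = ((2:ℕ):ℝ) by norm_num, Real.rpow_natCast]
  exact Real.sqrt_sq ht.le

-- monotone nonneg factors on [1,∞)
lemma A_nonneg (hγ : 1 < γ) {t : ℝ} (ht : 1 ≤ t) : 0 ≤ 1 - t ^ (-(1:ℝ)/((γ-1)/2)) := by
  have := Real.rpow_le_one_of_one_le_of_nonpos ht (le_of_lt (e1_neg hγ))
  linarith

lemma E_nonneg (hγ : 1 < γ) {t : ℝ} (ht : 1 ≤ t) :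
    0 ≤ t ^ ((1:ℝ)/((γ-1)/2)) - t ^ (-(2:ℝ)) := by
  have h1 : t ^ (-(2:ℝ)) ≤ 1 := Real.rpow_le_one_of_one_le_of_nonpos ht (by norm_num)
  have h2 : (1:ℝ) ≤ t ^ ((1:ℝ)/((γ-1)/2)) := by
    exact Real.one_le_rpow ht (by
      apply div_nonneg <;> linarith)
  linarith

lemma rpow_anti (hγ : 1 < γ) {y x c : ℝ} (hy : 1 ≤ y) (hyx : y ≤ x) (hc : c ≤ 0) :
    x ^ c ≤ y ^ c := by
  have hy0 : (0:ℝ) < y := by linarith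
  have hx0 : (0:ℝ) < x := by linarith
  rw [show c = -(-c) by ring, Real.rpow_neg hx0.le, Real.rpow_neg hy0.le]
  exact inv_anti₀ (Real.rpow_pos_of_pos hy0 _) (Real.rpow_le_rpow hy0.le hyx (by linarith))

lemma A_mono (hγ : 1 < γ) {y x : ℝ} (hy : 1 ≤ y) (hyx : y ≤ x) :
    1 - y ^ (-(1:ℝ)/((γ-1)/2)) ≤ 1 - x ^ (-(1:ℝ)/((γ-1)/2)) := by
  have := rpow_anti hγ hy hyx (le_of_lt (e1_neg hγ))
  linarith

lemma E_mono (hγ : 1 < γ) {y x : ℝ} (hy : 1 ≤ y) (hyx : y ≤ x) :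
    y ^ ((1:ℝ)/((γ-1)/2)) - y ^ (-(2:ℝ)) ≤ x ^ ((1:ℝ)/((γ-1)/2)) - x ^ (-(2:ℝ)) := by
  have h1 : y ^ ((1:ℝ)/((γ-1)/2)) ≤ x ^ ((1:ℝ)/((γ-1)/2)) :=
    Real.rpow_le_rpow (by linarith) hyx (by apply div_nonneg <;> linarith)
  have h2 := rpow_anti hγ hy hyx (show (-(2:ℝ)) ≤ 0 by norm_num)
  linarith

lemma S_mono (hγ : 1 < γ) {y x : ℝ} (hy : 1 ≤ y) (hyx : y ≤ x) :
    x * shockPart γ y ≤ y * shockPart γ x := by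
  have hy0 : (0:ℝ) < y := by linarith
  have hx0 : (0:ℝ) < x := by linarith
  rw [shock_factored hγ hy0, shock_factored hγ hx0]
  have key : Real.sqrt ((1 - y ^ (-(1:ℝ)/((γ-1)/2))) * (y ^ ((1:ℝ)/((γ-1)/2)) - y ^ (-(2:ℝ))))
      ≤ Real.sqrt ((1 - x ^ (-(1:ℝ)/((γ-1)/2))) * (x ^ ((1:ℝ)/((γ-1)/2)) - x ^ (-(2:ℝ)))) := by
    apply Real.sqrt_le_sqrt
    exact mul_le_mul (A_mono hγ hy hyx) (E_mono hγ hy hyx) (E_nonneg hγ hy)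
      (A_nonneg hγ (le_trans hy hyx))
  have hxy : (0:ℝ) ≤ x * y := by positivity
  calc x * (y * Real.sqrt _) = (x*y) * Real.sqrt _ := by ring
    _ ≤ (x*y) * Real.sqrt _ := mul_le_mul_of_nonneg_left key hxy
    _ = y * (x * Real.sqrt _) := by ring

lemma S_pos_of_one_lt (hγ : 1 < γ) {x : ℝ} (hx : 1 < x) : 0 < shockPart γ x := by
  unfold shockPart
  apply Real.sqrt_pos.2
  apply mul_pos
  · have : x ^ (-(1:ℝ)/((γ-1)/2)) < 1 :=
      Real.rpow_lt_one_of_one_lt_of_neg hx (e1_neg hγ)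
    linarith
  · have : (1:ℝ) < x ^ (γ/((γ-1)/2)) :=
      (Real.one_lt_rpow_iff_of_pos (by linarith)).2 (Or.inl ⟨hx, e2_pos hγ⟩)
    linarith

lemma S_pos_of_lt_one (hγ : 1 < γ) {x : ℝ} (hx0 : 0 < x) (hx : x < 1) : 0 < shockPart γ x := by
  unfold shockPart
  apply Real.sqrt_pos.2
  apply mul_pos_of_neg_of_neg
  · have : (1:ℝ) < x ^ (-(1:ℝ)/((γ-1)/2)) :=
      Real.one_lt_rpow_of_pos_of_lt_one_of_neg hx0 hx (e1_neg hγ)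
    linarith
  · have : x ^ (γ/((γ-1)/2)) < 1 := Real.rpow_lt_one hx0.le hx (e2_pos hγ)
    linarith

lemma S_symm (hγ : 1 < γ) {x : ℝ} (hx : 0 < x) : shockPart γ x = x * shockPart γ x⁻¹ := by
  unfold shockPart
  have hs : ∀ t : ℝ, x * Real.sqrt t = Real.sqrt (x^2 * t) := fun t => by
    rw [Real.sqrt_mul (sq_nonneg x), Real.sqrt_sq hx.le]
  rw [hs]
  congr 1
  have hu : (0:ℝ) < x ^ (-(1:ℝ)/((γ-1)/2)) := Real.rpow_pos_of_pos hx _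
  have hv : (0:ℝ) < x ^ (γ/((γ-1)/2)) := Real.rpow_pos_of_pos hx _
  have h1 : x⁻¹ ^ (-(1:ℝ)/((γ-1)/2)) = (x ^ (-(1:ℝ)/((γ-1)/2)))⁻¹ :=
    Real.inv_rpow hx.le _
  have h2 : x⁻¹ ^ (γ/((γ-1)/2)) = (x ^ (γ/((γ-1)/2)))⁻¹ := Real.inv_rpow hx.le _
  have h3 : x ^ (-(1:ℝ)/((γ-1)/2)) * x ^ (γ/((γ-1)/2)) = x^2 := by
    rw [← Real.rpow_add hx, e_sum hγ]
    rw [show (2:ℝ) = ((2:ℕ):ℝ) by norm_num, Real.rpow_natCast]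
  rw [h1, h2, ← h3]
  set u := x ^ (-(1:ℝ)/((γ-1)/2))
  set v := x ^ (γ/((γ-1)/2))
  field_simp
  ring

end HeadonAux

open HeadonAux in
set_option maxHeartbeats 1600000 in
/-- a head-on interaction of a backward shock (b > 1) and a forward
    shock (0 < f < 1) always produces an outgoing backward shock (B > 1) and an
    outgoing forward shock (B > bf). -/
theorem headon_SS (γ : ℝ) (hγ : 1 < γ)
    (b f B : ℝ) (hb : 1 < b) (hf0 : 0 < f) (hf1 : f < 1) (hB : 0 < B)
    (heq : phiB γ B + b * f * phiB γ (B / (b * f)) + phiF γ f - f * phiB γ b = 0) :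
    1 < B ∧ b * f < B := by
  have ha : (0:ℝ) < (γ-1)/2 := by linarith
  have hκ : 0 < kappa γ := div_pos (Real.sqrt_pos.2 (by linarith)) ha
  have hbf : 0 < b * f := by positivity
  have hSb : 0 < shockPart γ b := S_pos_of_one_lt hγ hb
  have hSf : 0 < shockPart γ f := S_pos_of_lt_one hγ hf0 hf1
  have hpb : phiB γ b = shockPart γ b := if_neg (not_le.2 hb)
  have hpf : phiF γ f = -shockPart γ f := if_pos hf1
  set K := f * shockPart γ b + shockPart γ f with hKdef
  have hKpos : 0 < K := by positivity
  have heq' : phiB γ B + b * f * phiB γ (B / (b*f)) = K := by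
    rw [hpb, hpf] at heq; rw [hKdef]; linarith
  set g := f⁻¹ with hgdef
  have hfg : f * g = 1 := by rw [hgdef]; field_simp
  have hg1 : 1 < g := by
    by_contra hg1
    push_neg at hg1
    have hgpos : 0 < g := by rw [hgdef]; exact inv_pos.2 hf0
    nlinarith
  have hSg : 0 < shockPart γ g := S_pos_of_one_lt hγ hg1
  have hsymm : shockPart γ f = f * shockPart γ g := S_symm hγ hf0
  constructor
  · -- 1 < B
    by_contra h1
    push_neg at h1
    have hpB : phiB γ B = kappa γ * (B - 1) := if_pos h1
    set y := B / (b*f) with hydef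
    have hyB : b * f * y = B := by rw [hydef]; field_simp
    have h2 : K ≤ b * f * phiB γ y := by
      rw [hpB] at heq'
      nlinarith [hκ]
    have hy1 : 1 < y := by
      by_contra hy1
      push_neg at hy1
      have hp : phiB γ y = kappa γ * (y-1) := if_pos hy1
      rw [hp] at h2
      nlinarith [mul_nonneg (mul_pos hbf hκ).le (by linarith : (0:ℝ) ≤ 1 - y)]
    have hpy : phiB γ y = shockPart γ y := if_neg (not_le.2 hy1)
    rw [hpy] at h2
    set c := g / b with hcdef
    have hbfc : b * f * c = 1 := by
      rw [hcdef, hgdef]; field_simp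
    have hyc : y ≤ c := by
      have : b * f * y ≤ b * f * c := by rw [hyB, hbfc]; exact h1
      exact le_of_mul_le_mul_left this hbf
    have hc1 : 1 ≤ c := hy1.le.trans hyc
    have hcg : c ≤ g := by
      rw [hcdef]
      exact div_le_self (by linarith) hb.le
    have hSy : 0 ≤ shockPart γ y := Real.sqrt_nonneg _
    have hSc : 0 ≤ shockPart γ c := Real.sqrt_nonneg _
    have m1 := S_mono hγ hy1.le hyc
    have m2 := S_mono hγ hc1 hcg
    -- S y ≤ B * S c ≤ S c
    have t1 : shockPart γ y ≤ shockPart γ c := by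
      have h3 := mul_le_mul_of_nonneg_left m1 hbf.le
      have e1 : b*f*(c*shockPart γ y) = shockPart γ y := by
        rw [show b*f*(c*shockPart γ y) = (b*f*c)*shockPart γ y by ring, hbfc, one_mul]
      have e2 : b*f*(y*shockPart γ c) = B*shockPart γ c := by
        rw [show b*f*(y*shockPart γ c) = (b*f*y)*shockPart γ c by ring, hyB]
      nlinarith
    -- b*f*S c ≤ f * S g = S f
    have t3 : b*f*shockPart γ c ≤ shockPart γ f := by
      have h4 := mul_le_mul_of_nonneg_left m2 hf0.le
      have e3 : f*(g*shockPart γ c) = shockPart γ c := by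
        rw [show f*(g*shockPart γ c) = (f*g)*shockPart γ c by ring, hfg, one_mul]
      have h5 : shockPart γ c ≤ f*(c*shockPart γ g) := by
        rw [← e3]; exact h4
      have h6 := mul_le_mul_of_nonneg_left h5 hbf.le
      have e4 : b*f*(f*(c*shockPart γ g)) = f * shockPart γ g := by
        rw [show b*f*(f*(c*shockPart γ g)) = (b*f*c)*(f*shockPart γ g) by ring, hbfc, one_mul]
      rw [e4] at h6
      rw [hsymm]
      exact h6
    have h7 := mul_le_mul_of_nonneg_left t1 hbf.le
    have h8 : 0 < f * shockPart γ b := mul_pos hf0 hSb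
    linarith
  · -- b*f < B
    by_contra h1
    push_neg at h1
    have hy1 : B / (b*f) ≤ 1 := (div_le_one hbf).2 h1
    have hpY : phiB γ (B/(b*f)) = kappa γ * (B/(b*f) - 1) := if_pos hy1
    rw [hpY] at heq'
    have h2 : K ≤ phiB γ B := by
      nlinarith [mul_nonneg (mul_pos hbf hκ).le (by linarith : (0:ℝ) ≤ 1 - B/(b*f))]
    have hB1 : 1 < B := by
      by_contra hB1
      push_neg at hB1
      have hpp : phiB γ B = kappa γ * (B - 1) := if_pos hB1
      rw [hpp] at h2
      have : kappa γ * (B - 1) ≤ 0 :=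
        mul_nonpos_iff.2 (Or.inl ⟨hκ.le, by linarith⟩)
      linarith
    have hpp : phiB γ B = shockPart γ B := if_neg (not_le.2 hB1)
    rw [hpp] at h2
    have hBb : B ≤ b := by nlinarith
    have m := S_mono hγ hB1.le hBb
    -- S B ≤ f * S b
    have hSB : 0 ≤ shockPart γ B := Real.sqrt_nonneg _
    have : b * shockPart γ B ≤ b * (f * shockPart γ b) := by
      calc b * shockPart γ B ≤ B * shockPart γ b := m
        _ ≤ b*f * shockPart γ b := by nlinarith
        _ = b * (f * shockPart γ b) := by ring
    have : shockPart γ B ≤ f * shockPart γ b :=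
      le_of_mul_le_mul_left this (by linarith)
    nlinarith
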